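/- For any commutative ring R, elements u_1,...,u_s ∈ R, and integers d ≥ 1 with d ≤ s, one has Σ_{k=0}^{d} (-1)^{d-k} e_k(u_1,...,u_s) · h_{d-k}(u_1,...,u_{s+1-d}) = e_d(u_{s+2-d},...,u_s), where the right-hand side is the d-th elementary symmetric polynomial in the last d-1 variables and hence equals 0 (since the number of variables d-1 is less than d). -/

import Mathlib

open Finset

/-- The `k`-th elementary symmetric function of `u` over an index set `F ⊆ ℕ`. -/
noncomputable def esymmOn {R : Type*} [CommRing R] (F : Finset ℕ) (u : ℕ → R) (k : ℕ) : R :=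
  ∑ A ∈ F.powersetCard k, ∏ i ∈ A, u i

/-- The complete homogeneous symmetric function of degree `j` of `u_1, …, u_m`. -/
noncomputable def hsymmUpTo {R : Type*} [CommRing R] (m : ℕ) (u : ℕ → R) (j : ℕ) : R :=
  ∑ c ∈ Finset.Nat.antidiagonalTuple m j, ∏ i : Fin m, u (i.1 + 1) ^ c i

section Aux

variable {R : Type*} [CommRing R] (u : ℕ → R)

lemma esymmOn_zero (F : Finset ℕ) : esymmOn F u 0 = 1 := by
  simp [esymmOn]

lemma esymmOn_card_lt {F : Finset ℕ} {k : ℕ} (h : F.card < k) : esymmOn F u k = 0 := by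
  simp [esymmOn, Finset.powersetCard_eq_empty.2 h]

lemma esymmOn_succ (a s k : ℕ) (ha : a ≤ s + 1) :
    esymmOn (Finset.Icc a (s+1)) u (k+1)
      = esymmOn (Finset.Icc a s) u (k+1) + u (s+1) * esymmOn (Finset.Icc a s) u k := by
  classical
  have hx : (s+1) ∉ Finset.Icc a s := by simp
  have hdisj : Disjoint ((Finset.Icc a s).powersetCard (k+1))
      (((Finset.Icc a s).powersetCard k).image (insert (s+1))) := by
    rw [Finset.disjoint_left]
    intro A hA hA'
    obtain ⟨B, hB, rfl⟩ := Finset.mem_image.1 hA'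
    have : (s+1) ∈ Finset.Icc a s :=
      (Finset.mem_powersetCard.1 hA).1 (Finset.mem_insert_self _ _)
    exact hx this
  have hinj : ∀ A ∈ (Finset.Icc a s).powersetCard k, ∀ B ∈ (Finset.Icc a s).powersetCard k,
      insert (s+1) A = insert (s+1) B → A = B := by
    intro A hA B hB hAB
    have hxA : (s+1) ∉ A := fun hmem => hx ((Finset.mem_powersetCard.1 hA).1 hmem)
    have hxB : (s+1) ∉ B := fun hmem => hx ((Finset.mem_powersetCard.1 hB).1 hmem)
    rw [← Finset.erase_insert hxA, ← Finset.erase_insert hxB, hAB]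
  rw [esymmOn, ← Finset.insert_Icc_right_eq_Icc_add_one ha, Finset.powersetCard_succ_insert hx,
    Finset.sum_union hdisj, Finset.sum_image hinj, esymmOn, esymmOn, Finset.mul_sum]
  congr 1
  apply Finset.sum_congr rfl
  intro A hA
  have hxA : (s+1) ∉ A := fun hmem => hx ((Finset.mem_powersetCard.1 hA).1 hmem)
  rw [Finset.prod_insert hxA]

lemma hsymmUpTo_zero (m : ℕ) : hsymmUpTo m u 0 = 1 := by
  simp [hsymmUpTo, Finset.Nat.antidiagonalTuple_zero_right]

lemma hsymmUpTo_zero_succ (j : ℕ) : hsymmUpTo 0 u (j+1) = 0 := by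
  simp [hsymmUpTo, Finset.Nat.antidiagonalTuple_zero_succ]

lemma hsymmUpTo_succ (m j : ℕ) :
    hsymmUpTo (m+1) u (j+1) = hsymmUpTo m u (j+1) + u (m+1) * hsymmUpTo (m+1) u j := by
  classical
  rw [hsymmUpTo,
    ← Finset.sum_filter_add_sum_filter_not _ (fun c => c (Fin.last m) = 0)]
  congr 1
  · rw [hsymmUpTo]
    refine Finset.sum_nbij' (fun c => Fin.init c) (fun c => Fin.snoc c 0) ?_ ?_ ?_ ?_ ?_
    · intro c hc
      simp only [Finset.mem_filter, Finset.Nat.mem_antidiagonalTuple] at hc ⊢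
      have hsum := Fin.sum_univ_castSucc (f := c)
      have : ∑ i : Fin m, Fin.init c i = ∑ i : Fin m, c i.castSucc := rfl
      omega
    · intro c hc
      simp only [Finset.mem_filter, Finset.Nat.mem_antidiagonalTuple] at hc ⊢
      constructor
      · rw [Fin.sum_univ_castSucc]
        simp [Fin.snoc_castSucc, Fin.snoc_last, hc]
      · simp [Fin.snoc_last]
    · intro c hc
      simp only [Finset.mem_filter] at hc
      rw [← hc.2]
      exact Fin.snoc_init_self c
    · intro c _
      simp
    · intro c hc
      simp only [Finset.mem_filter] at hc
      rw [Fin.prod_univ_castSucc]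
      simp [Fin.init, hc.2]
  · rw [hsymmUpTo, Finset.mul_sum]
    refine Finset.sum_nbij'
      (fun c => Function.update c (Fin.last m) (c (Fin.last m) - 1))
      (fun c => Function.update c (Fin.last m) (c (Fin.last m) + 1)) ?_ ?_ ?_ ?_ ?_
    · intro c hc
      simp only [Finset.mem_filter, Finset.Nat.mem_antidiagonalTuple] at hc ⊢
      obtain ⟨hsum, hne⟩ := hc
      rw [Fin.sum_univ_castSucc] at hsum ⊢
      have h1 : ∀ i : Fin m,
          Function.update c (Fin.last m) (c (Fin.last m) - 1) i.castSucc = c i.castSucc := by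
        intro i
        exact Function.update_of_ne (Fin.castSucc_lt_last i).ne _ _
      rw [Finset.sum_congr rfl fun i _ => h1 i, Function.update_self]
      omega
    · intro c hc
      simp only [Finset.mem_filter, Finset.Nat.mem_antidiagonalTuple] at hc ⊢
      rw [Fin.sum_univ_castSucc] at hc
      have h1 : ∀ i : Fin m,
          Function.update c (Fin.last m) (c (Fin.last m) + 1) i.castSucc = c i.castSucc := by
        intro i
        exact Function.update_of_ne (Fin.castSucc_lt_last i).ne _ _
      constructor
      · rw [Fin.sum_univ_castSucc, Finset.sum_congr rfl fun i _ => h1 i, Function.update_self]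
        omega
      · rw [Function.update_self]; omega
    · intro c hc
      simp only [Finset.mem_filter] at hc
      simp only [Function.update_idem, Function.update_self]
      have : c (Fin.last m) - 1 + 1 = c (Fin.last m) := by omega
      rw [this, Function.update_eq_self]
    · intro c _
      simp only [Function.update_idem, Function.update_self, Nat.add_sub_cancel,
        Function.update_eq_self]
    · intro c hc
      simp only [Finset.mem_filter] at hc
      have h1 : ∀ i : Fin m,
          Function.update c (Fin.last m) (c (Fin.last m) - 1) i.castSucc = c i.castSucc := by
        intro i
        exact Function.update_of_ne (Fin.castSucc_lt_last i).ne _ _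
      rw [Fin.prod_univ_castSucc, Fin.prod_univ_castSucc]
      simp only [h1, Function.update_self, Fin.val_last]
      have hpow : u (m + 1) ^ c (Fin.last m)
          = u (m + 1) * u (m + 1) ^ (c (Fin.last m) - 1) := by
        conv_lhs => rw [show c (Fin.last m) = (c (Fin.last m) - 1) + 1 by omega]
        rw [pow_succ]
        ring
      rw [hpow]
      ring
end Aux

section Main

variable {R : Type*} [CommRing R] (u : ℕ → R)

lemma expandE (a s d : ℕ) (ha : a ≤ s + 1) (G : ℕ → R) :
    (∑ k ∈ Finset.range (d+2), (-1:R)^k * esymmOn (Finset.Icc a (s+1)) u k * G (d+1-k))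
      = (∑ k ∈ Finset.range (d+2), (-1:R)^k * esymmOn (Finset.Icc a s) u k * G (d+1-k))
        - u (s+1) * ∑ k ∈ Finset.range (d+1),
            (-1:R)^k * esymmOn (Finset.Icc a s) u k * G (d-k) := by
  rw [Finset.sum_range_succ'
        (fun k => (-1:R)^k * esymmOn (Finset.Icc a (s+1)) u k * G (d+1-k)) (d+1),
      Finset.sum_range_succ'
        (fun k => (-1:R)^k * esymmOn (Finset.Icc a s) u k * G (d+1-k)) (d+1)]
  have h : ∀ j ∈ Finset.range (d+1),
      (-1:R)^(j+1) * esymmOn (Finset.Icc a (s+1)) u (j+1) * G (d+1-(j+1))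
      = ((-1:R)^(j+1) * esymmOn (Finset.Icc a s) u (j+1) * G (d+1-(j+1))
          - u (s+1) * ((-1:R)^j * esymmOn (Finset.Icc a s) u j * G (d-j))) := by
    intro j hj
    rw [esymmOn_succ u a s j ha]
    have hjj : d+1-(j+1) = d-j := by omega
    rw [hjj, pow_succ]
    ring
  rw [Finset.sum_congr rfl h, Finset.sum_sub_distrib, ← Finset.mul_sum]
  simp only [esymmOn_zero]
  ring

lemma classical_id (m : ℕ) : ∀ d : ℕ,
    (∑ k ∈ Finset.range (d+1),
        (-1:R)^k * esymmOn (Finset.Icc 1 m) u k * hsymmUpTo m u (d-k))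
      = if d = 0 then 1 else 0 := by
  induction m with
  | zero =>
    intro d
    have hcard : (Finset.Icc 1 0).card = 0 := by simp
    cases d with
    | zero => simp [esymmOn_zero, hsymmUpTo_zero]
    | succ d =>
      rw [if_neg (Nat.succ_ne_zero d)]
      apply Finset.sum_eq_zero
      intro k hk
      cases k with
      | zero => simp [esymmOn_zero, hsymmUpTo_zero_succ]
      | succ k =>
        rw [esymmOn_card_lt u (by omega)]
        ring
  | succ m ih =>
    intro d
    induction d with
    | zero => simp [esymmOn_zero, hsymmUpTo_zero]
    | succ d ihd =>
      rw [if_neg (Nat.succ_ne_zero d)]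
      rw [Finset.sum_range_succ]
      have hsplit : ∀ k ∈ Finset.range (d+1),
          (-1:R)^k * esymmOn (Finset.Icc 1 (m+1)) u k * hsymmUpTo (m+1) u (d+1-k)
          = (-1:R)^k * esymmOn (Finset.Icc 1 (m+1)) u k * hsymmUpTo m u (d+1-k)
            + u (m+1) * ((-1:R)^k * esymmOn (Finset.Icc 1 (m+1)) u k * hsymmUpTo (m+1) u (d-k)) := by
        intro k hk
        have hk' : d+1-k = (d-k)+1 := by
          simp only [Finset.mem_range] at hk; omega
        rw [hk', hsymmUpTo_succ]
        ring
      rw [Finset.sum_congr rfl hsplit, Finset.sum_add_distrib, ← Finset.mul_sum, ihd]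
      have hlast : ((-1:R)^(d+1) * esymmOn (Finset.Icc 1 (m+1)) u (d+1)
            * hsymmUpTo (m+1) u (d+1-(d+1)))
          = (-1:R)^(d+1) * esymmOn (Finset.Icc 1 (m+1)) u (d+1) * hsymmUpTo m u (d+1-(d+1)) := by
        simp [hsymmUpTo_zero]
      have hA : (∑ k ∈ Finset.range (d+1),
            (-1:R)^k * esymmOn (Finset.Icc 1 (m+1)) u k * hsymmUpTo m u (d+1-k))
            + (-1:R)^(d+1) * esymmOn (Finset.Icc 1 (m+1)) u (d+1) * hsymmUpTo m u (d+1-(d+1))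
          = ∑ k ∈ Finset.range (d+2),
            (-1:R)^k * esymmOn (Finset.Icc 1 (m+1)) u k * hsymmUpTo m u (d+1-k) :=
        (Finset.sum_range_succ
          (fun k => (-1:R)^k * esymmOn (Finset.Icc 1 (m+1)) u k * hsymmUpTo m u (d+1-k))
          (d+1)).symm
      have hE := expandE u 1 m d (by omega) (hsymmUpTo m u)
      -- rearrange
      calc (∑ k ∈ Finset.range (d+1),
              (-1:R)^k * esymmOn (Finset.Icc 1 (m+1)) u k * hsymmUpTo m u (d+1-k))
            + u (m+1) * (if d = 0 then 1 else 0)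
            + (-1:R)^(d+1) * esymmOn (Finset.Icc 1 (m+1)) u (d+1)
              * hsymmUpTo (m+1) u (d+1-(d+1))
          = (∑ k ∈ Finset.range (d+2),
              (-1:R)^k * esymmOn (Finset.Icc 1 (m+1)) u k * hsymmUpTo m u (d+1-k))
            + u (m+1) * (if d = 0 then 1 else 0) := by
            rw [hlast] at *
            rw [← hA]; ring
        _ = ((if d+1 = 0 then (1:R) else 0) - u (m+1) * (if d = 0 then 1 else 0))
            + u (m+1) * (if d = 0 then 1 else 0) := by
            rw [hE, ih (d+1), ih d]
        _ = 0 := by simp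

lemma key_id (m : ℕ) : ∀ t d : ℕ,
    (∑ k ∈ Finset.range (d+1),
        (-1:R)^k * esymmOn (Finset.Icc 1 (m+t)) u k * hsymmUpTo m u (d-k))
      = (-1:R)^d * esymmOn (Finset.Icc (m+1) (m+t)) u d := by
  intro t
  induction t with
  | zero =>
    intro d
    simp only [Nat.add_zero]
    rw [classical_id]
    have hempty : Finset.Icc (m+1) m = ∅ := Finset.Icc_eq_empty (by omega)
    cases d with
    | zero => simp [hempty, esymmOn_zero]
    | succ d =>
      rw [hempty, esymmOn_card_lt u (by simp)]
      simp
  | succ t ih =>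
    intro d
    cases d with
    | zero => simp [esymmOn_zero, hsymmUpTo_zero]
    | succ d =>
      have hE := expandE u 1 (m+t) d (by omega) (hsymmUpTo m u)
      show (∑ k ∈ Finset.range (d+2),
          (-1:R)^k * esymmOn (Finset.Icc 1 ((m+t)+1)) u k * hsymmUpTo m u (d+1-k))
        = (-1:R)^(d+1) * esymmOn (Finset.Icc (m+1) ((m+t)+1)) u (d+1)
      rw [hE, ih (d+1), ih d, esymmOn_succ u (m+1) (m+t) d (by omega), pow_succ]
      ring

end Main

/-- `Σ_{k=0}^d (-1)^{d-k} e_k(u_1,…,u_s) h_{d-k}(u_1,…,u_{s+1-d})`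
equals `e_d(u_{s+2-d},…,u_s)`, which is `0`. -/
theorem stmt_5 {R : Type*} [CommRing R] (s d : ℕ) (u : ℕ → R) (hd1 : 1 ≤ d) (hds : d ≤ s) :
    (∑ k ∈ Finset.range (d + 1),
        (-1 : R) ^ (d - k) * esymmOn (Finset.Icc 1 s) u k * hsymmUpTo (s + 1 - d) u (d - k))
        = esymmOn (Finset.Icc (s + 2 - d) s) u d ∧
    esymmOn (Finset.Icc (s + 2 - d) s) u d = 0 := by
  have hzero : esymmOn (Finset.Icc (s + 2 - d) s) u d = 0 := by
    apply esymmOn_card_lt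
    rw [Nat.card_Icc]
    omega
  refine ⟨?_, hzero⟩
  set m := s + 1 - d with hm
  have hmt : m + (d - 1) = s := by omega
  have hsign : ∀ k ∈ Finset.range (d+1),
      (-1:R)^(d-k) * esymmOn (Finset.Icc 1 s) u k * hsymmUpTo m u (d-k)
      = (-1:R)^d * ((-1:R)^k * esymmOn (Finset.Icc 1 s) u k * hsymmUpTo m u (d-k)) := by
    intro k hk
    simp only [Finset.mem_range] at hk
    have h1 : (-1:R)^(d-k) * (-1:R)^k = (-1:R)^d := by
      rw [← pow_add]
      congr 1
      omega
    have h2 : ((-1:R)^k) * ((-1:R)^k) = 1 := by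
      rw [← pow_add, Even.neg_one_pow ⟨k, by ring⟩]
    have h3 : (-1:R)^(d-k) = (-1:R)^d * (-1:R)^k := by
      calc (-1:R)^(d-k) = (-1:R)^(d-k) * (((-1:R)^k) * ((-1:R)^k)) := by rw [h2, mul_one]
        _ = ((-1:R)^(d-k) * (-1:R)^k) * (-1:R)^k := by ring
        _ = (-1:R)^d * (-1:R)^k := by rw [h1]
    rw [h3]
    ring
  rw [Finset.sum_congr rfl hsign, ← Finset.mul_sum]
  have hkey := key_id u m (d-1) d
  rw [hmt] at hkey
  rw [hkey]
  have hicc : m + 1 = s + 2 - d := by omega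
  rw [hicc, ← mul_assoc, ← pow_add, Even.neg_one_pow ⟨d, by ring⟩, one_mul]
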